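/- Let G be a regular λ-expander on vertex set V of size n, and assign to each vertex v a matrix H_v ∈ ℂ^{D×D} with ‖H_v‖ ≤ ℓ and Σ_v H_v = 0. Let P̃ = P ⊗ I_D where P is the normalized adjacency matrix, and let E be the block-diagonal matrix with blocks exp(t H_v); assume ‖E‖ ≤ exp(γt). For z ∈ ℂ^{nD}, writing z^∥ for the projection onto span{𝟏 ⊗ e_i : 1 ≤ i ≤ D} and z^⊥ for the orthogonal component, the following hold: (1) ‖(E P̃ z^∥)^∥‖ ≤ (e^{tℓ} − tℓ)‖z^∥‖; (2) ‖(E P̃ z^∥)^⊥‖ ≤ (e^{tℓ} − 1)‖z^∥‖; (3) ‖(E P̃ z^⊥)^∥‖ ≤ λ(e^{tℓ} − 1)‖z^⊥‖; (4) ‖(E P̃ z^⊥)^⊥‖ ≤ λ e^{tγ}‖z^⊥‖. -/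

import Mathlib

set_option maxHeartbeats 1000000

open Matrix Kronecker

/-- Euclidean norm of a finitely-indexed complex vector. -/
noncomputable def evnorm {ι : Type*} [Fintype ι] (z : ι → ℂ) : ℝ :=
  Real.sqrt (∑ i, ‖z i‖ ^ 2)

/-- Projection of `z ∈ ℂ^{n·D}` onto the span of the vectors `𝟏 ⊗ e_i`, `1 ≤ i ≤ D`:
averaging over the first (vertex) coordinate. -/
noncomputable def parComp (n D : ℕ) (z : Fin n × Fin D → ℂ) : Fin n × Fin D → ℂ :=
  fun p => (n : ℂ)⁻¹ * ∑ u : Fin n, z (u, p.2)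

/-- Orthogonal complement component. -/
noncomputable def perpComp (n D : ℕ) (z : Fin n × Fin D → ℂ) : Fin n × Fin D → ℂ :=
  z - parComp n D z


open NormedSpace in
lemma exp_tail_bound {A : Type*} [NormedRing A] [NormedAlgebra ℂ A] [CompleteSpace A]
    (x : A) (m : ℕ) (hm : 0 < m) :
    ‖exp x - ∑ k ∈ Finset.range m, ((Nat.factorial k : ℂ))⁻¹ • x ^ k‖ ≤
      Real.exp ‖x‖ - ∑ k ∈ Finset.range m, ‖x‖ ^ k / (Nat.factorial k) := by
  have hf : Summable (fun k : ℕ => ((Nat.factorial k : ℂ))⁻¹ • x ^ k) := expSeries_summable' (𝕂 := ℂ) x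
  have hfn : Summable (fun k : ℕ => ‖((Nat.factorial k : ℂ))⁻¹ • x ^ k‖) := norm_expSeries_summable' (𝕂 := ℂ) x
  have hg : Summable (fun k : ℕ => ‖x‖ ^ k / (Nat.factorial k)) := Real.summable_pow_div_factorial ‖x‖
  have hfn' : Summable (fun k : ℕ => ‖((Nat.factorial (k + m) : ℂ))⁻¹ • x ^ (k + m)‖) :=
    (summable_nat_add_iff m).2 hfn
  have hf' : Summable (fun k : ℕ => ((Nat.factorial (k + m) : ℂ))⁻¹ • x ^ (k + m)) :=
    (summable_nat_add_iff m).2 hf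
  have hg' : Summable (fun k : ℕ => ‖x‖ ^ (k + m) / (Nat.factorial (k + m))) :=
    (summable_nat_add_iff m).2 hg
  have hsplit : ∑ k ∈ Finset.range m, ((Nat.factorial k : ℂ))⁻¹ • x ^ k
      + ∑' k : ℕ, ((Nat.factorial (k + m) : ℂ))⁻¹ • x ^ (k + m)
      = ∑' k : ℕ, ((Nat.factorial k : ℂ))⁻¹ • x ^ k := hf.sum_add_tsum_nat_add m
  have hgsplit : ∑ k ∈ Finset.range m, ‖x‖ ^ k / (Nat.factorial k)
      + ∑' k : ℕ, ‖x‖ ^ (k + m) / (Nat.factorial (k + m))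
      = ∑' k : ℕ, ‖x‖ ^ k / (Nat.factorial k) := hg.sum_add_tsum_nat_add m
  have hexp : exp x = ∑' k : ℕ, ((Nat.factorial k : ℂ))⁻¹ • x ^ k := by rw [exp_eq_tsum (𝕂 := ℂ)]
  have hre : Real.exp ‖x‖ = ∑' k : ℕ, ‖x‖ ^ k / (Nat.factorial k) := by
    rw [Real.exp_eq_exp_ℝ, exp_eq_tsum_div]
  have h1 : exp x - ∑ k ∈ Finset.range m, ((Nat.factorial k : ℂ))⁻¹ • x ^ k
      = ∑' k : ℕ, ((Nat.factorial (k + m) : ℂ))⁻¹ • x ^ (k + m) := by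
    rw [hexp, ← hsplit]; abel
  have h2 : ‖∑' k : ℕ, ((Nat.factorial (k + m) : ℂ))⁻¹ • x ^ (k + m)‖
      ≤ ∑' k : ℕ, ‖x‖ ^ (k + m) / (Nat.factorial (k + m)) := by
    refine le_trans (norm_tsum_le_tsum_norm hfn') (Summable.tsum_le_tsum (fun k => ?_) hfn' hg')
    rw [norm_smul, norm_inv]
    have hp : ‖x ^ (k + m)‖ ≤ ‖x‖ ^ (k + m) := norm_pow_le' x (Nat.add_pos_right k hm)
    have hn : ‖((Nat.factorial (k + m)) : ℂ)‖ = ((Nat.factorial (k + m)) : ℝ) := by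
      rw [Complex.norm_natCast]
    rw [hn, div_eq_inv_mul]
    exact mul_le_mul_of_nonneg_left hp (by positivity)
  rw [h1]
  linarith [h2, hgsplit, hre.symm]

open NormedSpace in
lemma norm_exp_sub_one_le' {A : Type*} [NormedRing A] [NormedAlgebra ℂ A] [CompleteSpace A]
    (x : A) : ‖exp x - 1‖ ≤ Real.exp ‖x‖ - 1 := by
  have h := exp_tail_bound x 1 one_pos
  rw [Finset.sum_range_one, Finset.sum_range_one] at h
  simpa [Nat.factorial] using h

open NormedSpace in
lemma norm_exp_sub_one_sub_le' {A : Type*} [NormedRing A] [NormedAlgebra ℂ A] [CompleteSpace A]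
    (x : A) : ‖exp x - 1 - x‖ ≤ Real.exp ‖x‖ - 1 - ‖x‖ := by
  have h := exp_tail_bound x 2 (by norm_num)
  rw [Finset.sum_range_succ, Finset.sum_range_succ, Finset.sum_range_zero,
    Finset.sum_range_succ, Finset.sum_range_succ, Finset.sum_range_zero] at h
  simp [Nat.factorial] at h
  calc ‖exp x - 1 - x‖ = ‖exp x - (1 + x)‖ := by rw [sub_sub]
  _ ≤ Real.exp ‖x‖ - (1 + ‖x‖) := by convert h using 1
  _ = Real.exp ‖x‖ - 1 - ‖x‖ := by ring

open scoped Matrix.Norms.L2Operator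

lemma evnorm_def {ι : Type*} [Fintype ι] (z : ι → ℂ) :
    evnorm z = ‖(WithLp.equiv 2 (ι → ℂ)).symm z‖ := by
  rw [EuclideanSpace.norm_eq]
  simp [evnorm]

lemma evnorm_nonneg {ι : Type*} [Fintype ι] (z : ι → ℂ) : 0 ≤ evnorm z :=
  Real.sqrt_nonneg _

lemma evnorm_sq {ι : Type*} [Fintype ι] (z : ι → ℂ) :
    evnorm z ^ 2 = ∑ i, ‖z i‖ ^ 2 :=
  Real.sq_sqrt (Finset.sum_nonneg fun _ _ => sq_nonneg _)

lemma le_of_sq_le_sq' {a b : ℝ} (ha : 0 ≤ a) (hb : 0 ≤ b) (h : a ^ 2 ≤ b ^ 2) : a ≤ b := by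
  nlinarith

lemma evnorm_add_le {ι : Type*} [Fintype ι] (x y : ι → ℂ) :
    evnorm (x + y) ≤ evnorm x + evnorm y := by
  rw [evnorm_def, evnorm_def, evnorm_def]
  exact norm_add_le ((WithLp.equiv 2 (ι → ℂ)).symm x) ((WithLp.equiv 2 (ι → ℂ)).symm y)

lemma evnorm_mulVec_le {ι : Type*} [Fintype ι] [DecidableEq ι] (M : Matrix ι ι ℂ) (x : ι → ℂ) :
    evnorm (M.mulVec x) ≤ ‖M‖ * evnorm x := by
  rw [evnorm_def, evnorm_def]
  exact M.l2_opNorm_mulVec ((WithLp.equiv 2 (ι → ℂ)).symm x)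

lemma sum_perpComp (n D : ℕ) (z : Fin n × Fin D → ℂ) (i : Fin D) :
    ∑ v : Fin n, perpComp n D z (v, i) = 0 := by
  rcases Nat.eq_zero_or_pos n with hn | hn
  · subst hn; simp
  simp only [perpComp, Pi.sub_apply, Finset.sum_sub_distrib, parComp]
  rw [Finset.sum_const, Finset.card_univ, Fintype.card_fin]
  have hne : (n : ℂ) ≠ 0 := Nat.cast_ne_zero.2 hn.ne'
  rw [nsmul_eq_mul, ← mul_assoc, mul_inv_cancel₀ hne, one_mul, sub_self]

lemma parComp_add (n D : ℕ) (a b : Fin n × Fin D → ℂ) :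
    parComp n D (a + b) = parComp n D a + parComp n D b := by
  funext p
  simp [parComp, Finset.sum_add_distrib, mul_add]

lemma parComp_perpComp (n D : ℕ) (z : Fin n × Fin D → ℂ) :
    parComp n D (perpComp n D z) = 0 := by
  funext p
  simp [parComp, sum_perpComp n D z p.2]

lemma parComp_idem (n D : ℕ) (hn : 0 < n) (z : Fin n × Fin D → ℂ) :
    parComp n D (parComp n D z) = parComp n D z := by
  have hne : (n : ℂ) ≠ 0 := Nat.cast_ne_zero.2 hn.ne'
  funext p
  simp only [parComp]
  rw [Finset.sum_const, Finset.card_univ, Fintype.card_fin, nsmul_eq_mul, ← mul_assoc,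
    inv_mul_cancel₀ hne, one_mul]

lemma perpComp_parComp (n D : ℕ) (hn : 0 < n) (z : Fin n × Fin D → ℂ) :
    perpComp n D (parComp n D z) = 0 := by
  rw [perpComp, parComp_idem n D hn, sub_self]

lemma cross_sum (n D : ℕ) (z : Fin n × Fin D → ℂ) :
    ∑ p : Fin n × Fin D, parComp n D z p * (starRingEnd ℂ) (perpComp n D z p) = 0 := by
  rw [Fintype.sum_prod_type_right]
  refine Finset.sum_eq_zero fun i _ => ?_
  have : ∀ v : Fin n, parComp n D z (v, i) * (starRingEnd ℂ) (perpComp n D z (v, i))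
      = ((n : ℂ)⁻¹ * ∑ u : Fin n, z (u, i)) * (starRingEnd ℂ) (perpComp n D z (v, i)) :=
    fun v => rfl
  rw [Finset.sum_congr rfl fun v _ => this v, ← Finset.mul_sum, ← map_sum,
    sum_perpComp, map_zero, mul_zero]

lemma pyth (n D : ℕ) (z : Fin n × Fin D → ℂ) :
    evnorm z ^ 2 = evnorm (parComp n D z) ^ 2 + evnorm (perpComp n D z) ^ 2 := by
  rw [evnorm_sq, evnorm_sq, evnorm_sq]
  have hterm : ∀ p : Fin n × Fin D, ‖z p‖ ^ 2
      = ‖parComp n D z p‖ ^ 2 + ‖perpComp n D z p‖ ^ 2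
        + 2 * (parComp n D z p * (starRingEnd ℂ) (perpComp n D z p)).re := by
    intro p
    have hz : z p = parComp n D z p + perpComp n D z p := by simp [perpComp]
    rw [Complex.sq_norm, Complex.sq_norm, Complex.sq_norm, hz, Complex.normSq_add]
  rw [Finset.sum_congr rfl fun p _ => hterm p]
  rw [Finset.sum_add_distrib, Finset.sum_add_distrib]
  have : ∑ p : Fin n × Fin D, 2 * (parComp n D z p * (starRingEnd ℂ) (perpComp n D z p)).re
      = 2 * (∑ p : Fin n × Fin D, parComp n D z p * (starRingEnd ℂ) (perpComp n D z p)).re := by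
    rw [Complex.re_sum, Finset.mul_sum]
  rw [this, cross_sum, Complex.zero_re, mul_zero, add_zero]

lemma evnorm_parComp_le (n D : ℕ) (z : Fin n × Fin D → ℂ) :
    evnorm (parComp n D z) ≤ evnorm z := by
  have h := pyth n D z
  refine le_of_sq_le_sq' (evnorm_nonneg _) (evnorm_nonneg _) ?_
  nlinarith [sq_nonneg (evnorm (perpComp n D z))]

lemma evnorm_perpComp_le (n D : ℕ) (z : Fin n × Fin D → ℂ) :
    evnorm (perpComp n D z) ≤ evnorm z := by
  have h := pyth n D z
  refine le_of_sq_le_sq' (evnorm_nonneg _) (evnorm_nonneg _) ?_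
  nlinarith [sq_nonneg (evnorm (parComp n D z))]

noncomputable def bdiag (n D : ℕ) (b : Fin n → Matrix (Fin D) (Fin D) ℂ) :
    Matrix (Fin n × Fin D) (Fin n × Fin D) ℂ :=
  Matrix.of fun p q => if p.1 = q.1 then b p.1 p.2 q.2 else 0

lemma bdiag_mulVec (n D : ℕ) (b : Fin n → Matrix (Fin D) (Fin D) ℂ)
    (w : Fin n × Fin D → ℂ) (p : Fin n × Fin D) :
    (bdiag n D b).mulVec w p = ((b p.1).mulVec fun j => w (p.1, j)) p.2 := by
  simp only [Matrix.mulVec, dotProduct, bdiag, Matrix.of_apply]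
  rw [Fintype.sum_prod_type]
  rw [Finset.sum_eq_single p.1]
  · simp
  · intro u _ hu
    refine Finset.sum_eq_zero fun j _ => ?_
    rw [if_neg (fun h => hu h.symm), zero_mul]
  · intro h; exact absurd (Finset.mem_univ _) h

lemma bdiag_add (n D : ℕ) (b1 b2 : Fin n → Matrix (Fin D) (Fin D) ℂ) :
    bdiag n D (fun v => b1 v + b2 v) = bdiag n D b1 + bdiag n D b2 := by
  ext p q
  by_cases h : p.1 = q.1 <;> simp [bdiag, h]

lemma bdiag_sub (n D : ℕ) (b1 b2 : Fin n → Matrix (Fin D) (Fin D) ℂ) :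
    bdiag n D (fun v => b1 v - b2 v) = bdiag n D b1 - bdiag n D b2 := by
  ext p q
  by_cases h : p.1 = q.1 <;> simp [bdiag, h]

lemma bdiag_one (n D : ℕ) :
    bdiag n D (fun _ => (1 : Matrix (Fin D) (Fin D) ℂ)) = 1 := by
  ext p q
  rcases p with ⟨v, i⟩; rcases q with ⟨u, j⟩
  by_cases h : v = u <;> simp [bdiag, Matrix.one_apply, Prod.ext_iff, h]

lemma evnorm_bdiag_le (n D : ℕ) (b : Fin n → Matrix (Fin D) (Fin D) ℂ) (C : ℝ)
    (hC : 0 ≤ C) (hb : ∀ v, ‖b v‖ ≤ C) (w : Fin n × Fin D → ℂ) :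
    evnorm ((bdiag n D b).mulVec w) ≤ C * evnorm w := by
  refine le_of_sq_le_sq' (evnorm_nonneg _) (mul_nonneg hC (evnorm_nonneg _)) ?_
  rw [evnorm_sq, mul_pow, evnorm_sq, Fintype.sum_prod_type]
  have key : ∀ v : Fin n, ∑ i : Fin D, ‖(bdiag n D b).mulVec w (v, i)‖ ^ 2
      = evnorm ((b v).mulVec fun j => w (v, j)) ^ 2 := by
    intro v; rw [evnorm_sq]
    exact Finset.sum_congr rfl fun i _ => by rw [bdiag_mulVec]
  rw [Finset.sum_congr rfl fun v _ => key v]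
  have hv : ∀ v : Fin n, evnorm ((b v).mulVec fun j => w (v, j)) ^ 2
      ≤ C ^ 2 * evnorm (fun j => w (v, j)) ^ 2 := by
    intro v
    have h1 : evnorm ((b v).mulVec fun j => w (v, j)) ≤ C * evnorm (fun j => w (v, j)) :=
      le_trans (evnorm_mulVec_le _ _) (mul_le_mul_of_nonneg_right (hb v) (evnorm_nonneg _))
    have h2 := pow_le_pow_left₀ (evnorm_nonneg _) h1 2
    rwa [mul_pow] at h2
  calc ∑ v : Fin n, evnorm ((b v).mulVec fun j => w (v, j)) ^ 2
      ≤ ∑ v : Fin n, C ^ 2 * evnorm (fun j => w (v, j)) ^ 2 :=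
        Finset.sum_le_sum fun v _ => hv v
    _ = C ^ 2 * ∑ v : Fin n, ∑ j : Fin D, ‖w (v, j)‖ ^ 2 := by
        rw [← Finset.mul_sum]
        congr 1
        exact Finset.sum_congr rfl fun v _ => evnorm_sq _
    _ = C ^ 2 * ∑ p : Fin n × Fin D, ‖w p‖ ^ 2 := by
        congr 1
        exact (Fintype.sum_prod_type (f := fun p : Fin n × Fin D => ‖w p‖ ^ 2)).symm

lemma kron_mulVec_apply (n D : ℕ) (P : Matrix (Fin n) (Fin n) ℝ)
    (w : Fin n × Fin D → ℂ) (p : Fin n × Fin D) :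
    ((P.map Complex.ofReal ⊗ₖ (1 : Matrix (Fin D) (Fin D) ℂ)).mulVec w) p
      = ∑ u : Fin n, (P p.1 u : ℂ) * w (u, p.2) := by
  simp only [Matrix.mulVec, dotProduct, Matrix.kroneckerMap_apply, Matrix.map_apply,
    Matrix.one_apply]
  rw [Fintype.sum_prod_type]
  refine Finset.sum_congr rfl fun u _ => ?_
  simp [mul_ite, ite_mul, mul_one, mul_zero, zero_mul, Finset.sum_ite_eq]

lemma kron_parComp (n D : ℕ) (P : Matrix (Fin n) (Fin n) ℝ)
    (hPreg : ∀ u, ∑ v, P u v = 1) (z : Fin n × Fin D → ℂ) :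
    (P.map Complex.ofReal ⊗ₖ (1 : Matrix (Fin D) (Fin D) ℂ)).mulVec (parComp n D z)
      = parComp n D z := by
  funext p
  rw [kron_mulVec_apply]
  have hc : ∀ u : Fin n, parComp n D z (u, p.2) = (n : ℂ)⁻¹ * ∑ w : Fin n, z (w, p.2) :=
    fun u => rfl
  rw [Finset.sum_congr rfl fun u _ => by rw [hc u]]
  rw [← Finset.sum_mul]
  have h1 : ∑ u : Fin n, ((P p.1 u : ℝ) : ℂ) = 1 := by
    rw [← Complex.ofReal_sum, hPreg p.1, Complex.ofReal_one]
  rw [h1, one_mul]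
  rfl

lemma parComp_kron (n D : ℕ) (P : Matrix (Fin n) (Fin n) ℝ)
    (hPsymm : P.IsSymm) (hPreg : ∀ u, ∑ v, P u v = 1) (w : Fin n × Fin D → ℂ) :
    parComp n D ((P.map Complex.ofReal ⊗ₖ (1 : Matrix (Fin D) (Fin D) ℂ)).mulVec w)
      = parComp n D w := by
  have hcol : ∀ u : Fin n, ∑ v : Fin n, ((P v u : ℝ) : ℂ) = 1 := by
    intro u
    have : ∀ v : Fin n, P v u = P u v := fun v => by
      conv_lhs => rw [← hPsymm]
      rfl
    rw [Finset.sum_congr rfl fun v _ => by rw [this v]]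
    rw [← Complex.ofReal_sum, hPreg u, Complex.ofReal_one]
  funext p
  simp only [parComp]
  congr 1
  rw [Finset.sum_congr rfl fun v _ => kron_mulVec_apply n D P w (v, p.2)]
  dsimp only
  rw [Finset.sum_comm]
  refine Finset.sum_congr rfl fun u _ => ?_
  rw [← Finset.sum_mul, hcol u, one_mul]

lemma evnorm_kron_perp (n D : ℕ) (lam : ℝ) (hlam0 : 0 ≤ lam)
    (P : Matrix (Fin n) (Fin n) ℝ)
    (hPexp : ∀ x : Fin n → ℂ, (∑ i, x i) = 0 →
      evnorm ((P.map (Complex.ofReal)).mulVec x) ≤ lam * evnorm x)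
    (w : Fin n × Fin D → ℂ) (hw : ∀ i, ∑ u : Fin n, w (u, i) = 0) :
    evnorm ((P.map Complex.ofReal ⊗ₖ (1 : Matrix (Fin D) (Fin D) ℂ)).mulVec w)
      ≤ lam * evnorm w := by
  refine le_of_sq_le_sq' (evnorm_nonneg _) (mul_nonneg hlam0 (evnorm_nonneg _)) ?_
  rw [evnorm_sq, mul_pow, evnorm_sq, Fintype.sum_prod_type_right]
  have key : ∀ i : Fin D, ∑ v : Fin n,
      ‖(P.map Complex.ofReal ⊗ₖ (1 : Matrix (Fin D) (Fin D) ℂ)).mulVec w (v, i)‖ ^ 2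
      = evnorm ((P.map Complex.ofReal).mulVec fun u => w (u, i)) ^ 2 := by
    intro i
    rw [evnorm_sq]
    refine Finset.sum_congr rfl fun v _ => ?_
    rw [kron_mulVec_apply]
    rfl
  rw [Finset.sum_congr rfl fun i _ => key i]
  have hv : ∀ i : Fin D, evnorm ((P.map Complex.ofReal).mulVec fun u => w (u, i)) ^ 2
      ≤ lam ^ 2 * evnorm (fun u => w (u, i)) ^ 2 := by
    intro i
    have h1 := hPexp (fun u => w (u, i)) (hw i)
    have h2 := pow_le_pow_left₀ (evnorm_nonneg _) h1 2
    rwa [mul_pow] at h2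
  calc ∑ i : Fin D, evnorm ((P.map Complex.ofReal).mulVec fun u => w (u, i)) ^ 2
      ≤ ∑ i : Fin D, lam ^ 2 * evnorm (fun u => w (u, i)) ^ 2 :=
        Finset.sum_le_sum fun i _ => hv i
    _ = lam ^ 2 * ∑ i : Fin D, ∑ v : Fin n, ‖w (v, i)‖ ^ 2 := by
        rw [← Finset.mul_sum]
        congr 1
        exact Finset.sum_congr rfl fun i _ => evnorm_sq _
    _ = lam ^ 2 * ∑ p : Fin n × Fin D, ‖w p‖ ^ 2 := by
        congr 1
        exact (Fintype.sum_prod_type_right (f := fun p : Fin n × Fin D => ‖w p‖ ^ 2)).symm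

lemma perpComp_add (n D : ℕ) (a b : Fin n × Fin D → ℂ) :
    perpComp n D (a + b) = perpComp n D a + perpComp n D b := by
  simp only [perpComp, parComp_add]
  abel

lemma exp_mono_aux {a c : ℝ} (ha : 0 ≤ a) (hac : a ≤ c) :
    Real.exp a - 1 - a ≤ Real.exp c - 1 - c := by
  have h1 : Real.exp a * Real.exp (c - a) = Real.exp c := by
    rw [← Real.exp_add]; ring_nf
  have h2 := Real.add_one_le_exp (c - a)
  have h3 : (1 : ℝ) ≤ Real.exp a := Real.one_le_exp ha
  nlinarith

/-- Healy-style lemma for expander walks with matrix weights. `P` is the normalized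
adjacency matrix of a regular `λ`-expander, each vertex `v` carries `H_v` with
`‖H_v‖ ≤ ℓ` (spectral norm) and `∑_v H_v = 0`; `P̃ = P ⊗ I_D`, and `E` is block
diagonal with blocks `exp(t H_v)`, satisfying `‖E‖ ≤ exp(γt)`. Then the four
contraction estimates on the parallel/orthogonal components hold. -/
theorem healy_lemma (n D : ℕ) (lam γ ℓ t : ℝ)
    (hlam : lam ∈ Set.Icc (0 : ℝ) 1) (hγ : 0 ≤ γ) (hℓ : 0 ≤ ℓ) (ht : 0 < t)
    (P : Matrix (Fin n) (Fin n) ℝ)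
    (hPsymm : P.IsSymm) (hPnonneg : ∀ u v, 0 ≤ P u v)
    (hPreg : ∀ u, ∑ v, P u v = 1)
    (hPexp : ∀ x : Fin n → ℂ, (∑ i, x i) = 0 →
      evnorm ((P.map (Complex.ofReal)).mulVec x) ≤ lam * evnorm x)
    (H : Fin n → Matrix (Fin D) (Fin D) ℂ)
    (hHnorm : ∀ v, ‖Matrix.toEuclideanCLM (𝕜 := ℂ) (H v)‖ ≤ ℓ)
    (hHsum : ∑ v, H v = 0)
    (E : Matrix (Fin n × Fin D) (Fin n × Fin D) ℂ)
    (hE : E = Matrix.of fun p q =>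
      if p.1 = q.1 then NormedSpace.exp ((t : ℂ) • H p.1) p.2 q.2 else 0)
    (hEnorm : ‖Matrix.toEuclideanCLM (𝕜 := ℂ) E‖ ≤ Real.exp (γ * t))
    (z : Fin n × Fin D → ℂ) :
    evnorm (parComp n D ((E * ((P.map (Complex.ofReal)) ⊗ₖ (1 : Matrix (Fin D) (Fin D) ℂ))).mulVec
        (parComp n D z))) ≤ (Real.exp (t * ℓ) - t * ℓ) * evnorm (parComp n D z) ∧
    evnorm (perpComp n D ((E * ((P.map (Complex.ofReal)) ⊗ₖ (1 : Matrix (Fin D) (Fin D) ℂ))).mulVec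
        (parComp n D z))) ≤ (Real.exp (t * ℓ) - 1) * evnorm (parComp n D z) ∧
    evnorm (parComp n D ((E * ((P.map (Complex.ofReal)) ⊗ₖ (1 : Matrix (Fin D) (Fin D) ℂ))).mulVec
        (perpComp n D z))) ≤ lam * (Real.exp (t * ℓ) - 1) * evnorm (perpComp n D z) ∧
    evnorm (perpComp n D ((E * ((P.map (Complex.ofReal)) ⊗ₖ (1 : Matrix (Fin D) (Fin D) ℂ))).mulVec
        (perpComp n D z))) ≤ lam * Real.exp (t * γ) * evnorm (perpComp n D z) := by
  classical
  rcases Nat.eq_zero_or_pos n with hn0 | hn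
  · subst hn0
    have he : ∀ x : Fin 0 × Fin D → ℂ, evnorm x = 0 := fun x => by simp [evnorm]
    refine ⟨?_, ?_, ?_, ?_⟩ <;> rw [he, he] <;> simp
  haveI : CompleteSpace (Matrix (Fin D) (Fin D) ℂ) := FiniteDimensional.complete ℂ _
  -- norms in the scoped operator norm
  have hH' : ∀ v, ‖H v‖ ≤ ℓ := fun v => by
    rw [Matrix.cstar_norm_def]; exact hHnorm v
  have hE' : ‖E‖ ≤ Real.exp (γ * t) := by
    rw [Matrix.cstar_norm_def]; exact hEnorm
  have hxvnorm : ∀ v, ‖(t : ℂ) • H v‖ ≤ t * ℓ := by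
    intro v
    rw [norm_smul]
    have h1 : ‖((t : ℝ) : ℂ)‖ = t := by
      rw [Complex.norm_real, Real.norm_of_nonneg ht.le]
    rw [h1]
    exact mul_le_mul_of_nonneg_left (hH' v) ht.le
  have hc2 : (0:ℝ) ≤ Real.exp (t * ℓ) - 1 - t * ℓ := by
    nlinarith [Real.add_one_le_exp (t * ℓ)]
  have hc1 : (0:ℝ) ≤ Real.exp (t * ℓ) - 1 := by
    nlinarith [Real.add_one_le_exp (t * ℓ), mul_nonneg ht.le hℓ]
  -- block norm bounds
  have hrb : ∀ v, ‖NormedSpace.exp ((t : ℂ) • H v) - 1 - (t : ℂ) • H v‖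
      ≤ Real.exp (t * ℓ) - 1 - t * ℓ := fun v =>
    (norm_exp_sub_one_sub_le' _).trans (exp_mono_aux (norm_nonneg _) (hxvnorm v))
  have h1b : ∀ v, ‖NormedSpace.exp ((t : ℂ) • H v) - 1‖ ≤ Real.exp (t * ℓ) - 1 := by
    intro v
    refine (norm_exp_sub_one_le' _).trans ?_
    have := Real.exp_le_exp.2 (hxvnorm v)
    linarith
  -- E block structure
  have hEbd : E = bdiag n D (fun v => NormedSpace.exp ((t : ℂ) • H v)) := hE
  have hE1 : E - 1 = bdiag n D (fun v => NormedSpace.exp ((t : ℂ) • H v) - 1) := by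
    rw [hEbd, ← bdiag_one n D]
    rw [← bdiag_sub]
  have hEdec : E = 1 + bdiag n D (fun v => (t : ℂ) • H v)
      + bdiag n D (fun v => NormedSpace.exp ((t : ℂ) • H v) - 1 - (t : ℂ) • H v) := by
    have hsum : (fun v : Fin n => NormedSpace.exp ((t : ℂ) • H v))
        = fun v : Fin n => ((1 : Matrix (Fin D) (Fin D) ℂ) + (t : ℂ) • H v)
          + (NormedSpace.exp ((t : ℂ) • H v) - 1 - (t : ℂ) • H v) := by
      funext v
      abel
    rw [hEbd, hsum, bdiag_add, bdiag_add, bdiag_one]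
  have hmv : ∀ w : Fin n × Fin D → ℂ, E.mulVec w
      = w + (bdiag n D (fun v => (t : ℂ) • H v)).mulVec w
        + (bdiag n D (fun v => NormedSpace.exp ((t : ℂ) • H v) - 1 - (t : ℂ) • H v)).mulVec w := by
    intro w
    conv_lhs => rw [hEdec]
    rw [Matrix.add_mulVec, Matrix.add_mulVec, Matrix.one_mulVec]
  have hmv1 : ∀ w : Fin n × Fin D → ℂ, E.mulVec w = w + (E - 1).mulVec w := by
    intro w
    rw [Matrix.sub_mulVec, Matrix.one_mulVec]
    abel
  -- parComp kills the H-block term on parallel vectors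
  have hparx : parComp n D ((bdiag n D (fun v => (t : ℂ) • H v)).mulVec (parComp n D z)) = 0 := by
    funext p
    have hb : ∀ v : Fin n, (bdiag n D (fun v => (t : ℂ) • H v)).mulVec (parComp n D z) (v, p.2)
        = ∑ j : Fin D, ((t : ℂ) • H v) p.2 j * ((n : ℂ)⁻¹ * ∑ u : Fin n, z (u, j)) := by
      intro v
      rw [bdiag_mulVec]
      rfl
    have hstep : parComp n D ((bdiag n D (fun v => (t : ℂ) • H v)).mulVec (parComp n D z)) p
        = (n : ℂ)⁻¹ * ∑ v : Fin n,
            ∑ j : Fin D, ((t : ℂ) • H v) p.2 j * ((n : ℂ)⁻¹ * ∑ u : Fin n, z (u, j)) := by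
      rw [show parComp n D ((bdiag n D (fun v => (t : ℂ) • H v)).mulVec (parComp n D z)) p
        = (n : ℂ)⁻¹ * ∑ v : Fin n,
            (bdiag n D (fun v => (t : ℂ) • H v)).mulVec (parComp n D z) (v, p.2) from rfl]
      rw [Finset.sum_congr rfl fun v _ => hb v]
    rw [hstep, Finset.sum_comm]
    have hz : ∀ j : Fin D, ∑ v : Fin n, ((t : ℂ) • H v) p.2 j * ((n : ℂ)⁻¹ * ∑ u : Fin n, z (u, j)) = 0 := by
      intro j
      rw [← Finset.sum_mul]
      have : ∑ v : Fin n, ((t : ℂ) • H v) p.2 j = (∑ v : Fin n, (t : ℂ) • H v) p.2 j :=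
        (Matrix.sum_apply p.2 j Finset.univ _).symm
      rw [this, ← Finset.smul_sum, hHsum, smul_zero, Matrix.zero_apply, zero_mul]
    rw [Finset.sum_congr rfl fun j _ => hz j]
    simp
  -- part 1
  have k1 : (E * ((P.map (Complex.ofReal)) ⊗ₖ (1 : Matrix (Fin D) (Fin D) ℂ))).mulVec (parComp n D z)
      = E.mulVec (parComp n D z) := by
    rw [← Matrix.mulVec_mulVec, kron_parComp n D P hPreg z]
  have part1 : evnorm (parComp n D ((E * ((P.map (Complex.ofReal)) ⊗ₖ (1 : Matrix (Fin D) (Fin D) ℂ))).mulVec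
      (parComp n D z))) ≤ (Real.exp (t * ℓ) - t * ℓ) * evnorm (parComp n D z) := by
    rw [k1, hmv (parComp n D z), parComp_add, parComp_add, hparx, add_zero,
      parComp_idem n D hn z]
    refine (evnorm_add_le _ _).trans ?_
    have h2 := evnorm_parComp_le n D
      ((bdiag n D (fun v => NormedSpace.exp ((t : ℂ) • H v) - 1 - (t : ℂ) • H v)).mulVec (parComp n D z))
    have h3 := evnorm_bdiag_le n D
      (fun v => NormedSpace.exp ((t : ℂ) • H v) - 1 - (t : ℂ) • H v)
      (Real.exp (t * ℓ) - 1 - t * ℓ) hc2 hrb (parComp n D z)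
    have hdist : (Real.exp (t * ℓ) - t * ℓ) * evnorm (parComp n D z)
        = evnorm (parComp n D z) + (Real.exp (t * ℓ) - 1 - t * ℓ) * evnorm (parComp n D z) := by
      ring
    linarith
  -- part 2
  have part2 : evnorm (perpComp n D ((E * ((P.map (Complex.ofReal)) ⊗ₖ (1 : Matrix (Fin D) (Fin D) ℂ))).mulVec
      (parComp n D z))) ≤ (Real.exp (t * ℓ) - 1) * evnorm (parComp n D z) := by
    rw [k1, hmv1 (parComp n D z), perpComp_add, perpComp_parComp n D hn z, zero_add]
    refine (evnorm_perpComp_le _ _ _).trans ?_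
    rw [hE1]
    exact evnorm_bdiag_le n D _ _ hc1 h1b (parComp n D z)
  -- parts 3 and 4
  have k3 : (E * ((P.map (Complex.ofReal)) ⊗ₖ (1 : Matrix (Fin D) (Fin D) ℂ))).mulVec (perpComp n D z)
      = E.mulVec (((P.map (Complex.ofReal)) ⊗ₖ (1 : Matrix (Fin D) (Fin D) ℂ)).mulVec (perpComp n D z)) :=
    (Matrix.mulVec_mulVec _ _ _).symm
  have hparw : parComp n D (((P.map (Complex.ofReal)) ⊗ₖ (1 : Matrix (Fin D) (Fin D) ℂ)).mulVec (perpComp n D z)) = 0 := by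
    rw [parComp_kron n D P hPsymm hPreg, parComp_perpComp]
  have hwn : evnorm (((P.map (Complex.ofReal)) ⊗ₖ (1 : Matrix (Fin D) (Fin D) ℂ)).mulVec (perpComp n D z))
      ≤ lam * evnorm (perpComp n D z) :=
    evnorm_kron_perp n D lam hlam.1 P hPexp (perpComp n D z) (sum_perpComp n D z)
  have part3 : evnorm (parComp n D ((E * ((P.map (Complex.ofReal)) ⊗ₖ (1 : Matrix (Fin D) (Fin D) ℂ))).mulVec
      (perpComp n D z))) ≤ lam * (Real.exp (t * ℓ) - 1) * evnorm (perpComp n D z) := by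
    rw [k3, hmv1, parComp_add, hparw, zero_add]
    refine (evnorm_parComp_le _ _ _).trans ?_
    rw [hE1]
    refine (evnorm_bdiag_le n D _ _ hc1 h1b _).trans ?_
    calc (Real.exp (t * ℓ) - 1) * evnorm (((P.map (Complex.ofReal)) ⊗ₖ (1 : Matrix (Fin D) (Fin D) ℂ)).mulVec (perpComp n D z))
        ≤ (Real.exp (t * ℓ) - 1) * (lam * evnorm (perpComp n D z)) :=
          mul_le_mul_of_nonneg_left hwn hc1
      _ = lam * (Real.exp (t * ℓ) - 1) * evnorm (perpComp n D z) := by ring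
  have part4 : evnorm (perpComp n D ((E * ((P.map (Complex.ofReal)) ⊗ₖ (1 : Matrix (Fin D) (Fin D) ℂ))).mulVec
      (perpComp n D z))) ≤ lam * Real.exp (t * γ) * evnorm (perpComp n D z) := by
    rw [k3]
    refine (evnorm_perpComp_le _ _ _).trans ?_
    refine (evnorm_mulVec_le E _).trans ?_
    calc ‖E‖ * evnorm (((P.map (Complex.ofReal)) ⊗ₖ (1 : Matrix (Fin D) (Fin D) ℂ)).mulVec (perpComp n D z))
        ≤ Real.exp (γ * t) * (lam * evnorm (perpComp n D z)) :=
          mul_le_mul hE' hwn (evnorm_nonneg _) (Real.exp_pos _).le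
      _ = lam * Real.exp (t * γ) * evnorm (perpComp n D z) := by rw [mul_comm γ t]; ring
  exact ⟨part1, part2, part3, part4⟩
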